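/- Let C(a,b) denote the optimal constant in the Poincaré inequality ‖f‖_{L²(A(a,b))} ≤ C‖∇f‖_{L²(A(a,b))} for W^{1,2} functions on the annulus A(a,b) ⊂ ℝ^d vanishing on the boundary, and let c(a,b) denote the optimal constant in ‖f‖_{L²((a,b))} ≤ c‖f'‖_{L²((a,b))} for W^{1,2} functions on the interval (a,b) vanishing at the endpoints. Then C(a,b) ≤ (b/a)^{(d-1)/2} · c(a,b). -/

import Mathlib

open MeasureTheory Real

/-- The open annulus `{x ∈ ℝ^d : a < |x| < b}`. -/
def annulus (d : ℕ) (a b : ℝ) : Set (EuclideanSpace ℝ (Fin d)) :=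
  {x | a < ‖x‖ ∧ ‖x‖ < b}

/-- Admissible functions for the Dirichlet–Poincaré inequality on the annulus. -/
def AdmissibleOnAnnulus (d : ℕ) (a b : ℝ)
    (u : EuclideanSpace ℝ (Fin d) → ℝ) : Prop :=
  ContinuousOn u (closure (annulus d a b)) ∧
  Set.EqOn u 0 (frontier (annulus d a b)) ∧
  DifferentiableOn ℝ u (annulus d a b) ∧
  MemLp u 2 (volume.restrict (annulus d a b)) ∧
  MemLp (fun x => ‖fderiv ℝ u x‖) 2 (volume.restrict (annulus d a b))

/-- The optimal constant in `‖u‖_{L²(A(a,b))} ≤ C ‖∇u‖_{L²(A(a,b))}` over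
admissible functions vanishing on the boundary of the annulus. -/
noncomputable def annulusPoincareConst (d : ℕ) (a b : ℝ) : ℝ :=
  sInf {C : ℝ | 0 ≤ C ∧ ∀ u : EuclideanSpace ℝ (Fin d) → ℝ,
    AdmissibleOnAnnulus d a b u →
      (∫ x in annulus d a b, u x ^ 2) ≤
        C ^ 2 * ∫ x in annulus d a b, ‖fderiv ℝ u x‖ ^ 2}

/-- Admissible pairs `(f, f')` for the one-dimensional Poincaré inequality on
`(a,b)` with zero boundary data: `f ∈ W^{1,2}((a,b))`, `f(a) = f(b) = 0`. -/
def AdmissibleOnInterval (a b : ℝ) (f f' : ℝ → ℝ) : Prop :=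
  MemLp f' 2 (volume.restrict (Set.Ioo a b)) ∧
  (∀ x ∈ Set.Icc a b, f x = ∫ s in a..x, f' s) ∧ f a = 0 ∧ f b = 0

/-- The optimal constant in `‖f‖_{L²((a,b))} ≤ c ‖f'‖_{L²((a,b))}` over
`W^{1,2}` functions on `(a,b)` vanishing at the endpoints. -/
noncomputable def intervalPoincareConst (a b : ℝ) : ℝ :=
  sInf {c : ℝ | 0 ≤ c ∧ ∀ f f' : ℝ → ℝ, AdmissibleOnInterval a b f f' →
    (∫ t in Set.Ioo a b, f t ^ 2) ≤ c ^ 2 * ∫ t in Set.Ioo a b, f' t ^ 2}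

section AuxiliaryLemmas

open Set Metric ENNReal

variable {d : ℕ}
local notation "Ed" => EuclideanSpace ℝ (Fin d)

lemma annulus_isOpen {d : ℕ} {a b : ℝ} : IsOpen (annulus d a b) := by
  have : annulus d a b = {x : EuclideanSpace ℝ (Fin d) | a < ‖x‖} ∩ {x | ‖x‖ < b} := by
    ext x; simp [annulus]
  rw [this]
  exact (isOpen_lt continuous_const continuous_norm).inter
    (isOpen_lt continuous_norm continuous_const)


lemma norm_smul_sphere {d : ℕ} (ω : sphere (0 : EuclideanSpace ℝ (Fin d)) 1) {r : ℝ}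
    (hr : 0 ≤ r) : ‖r • (ω : EuclideanSpace ℝ (Fin d))‖ = r := by
  rw [norm_smul, mem_sphere_zero_iff_norm.mp ω.2, Real.norm_eq_abs, abs_of_nonneg hr, mul_one]


lemma smul_mem_annulus {d : ℕ} {a b : ℝ} (ha : 0 < a) (ω : sphere (0 : EuclideanSpace ℝ (Fin d)) 1)
    {r : ℝ} (hr : 0 < r) : r • (ω : EuclideanSpace ℝ (Fin d)) ∈ annulus d a b ↔ r ∈ Ioo a b := by
  simp [annulus, norm_smul_sphere ω hr.le, mem_Ioo]


lemma smul_mem_closure {d : ℕ} {a b : ℝ} (ha : 0 < a) (hab : a < b)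
    (ω : sphere (0 : EuclideanSpace ℝ (Fin d)) 1) {x : ℝ} (hx : x ∈ Icc a b) :
    x • (ω : EuclideanSpace ℝ (Fin d)) ∈ closure (annulus d a b) := by
  have h1 : x ∈ closure (Ioo a b) := by rwa [closure_Ioo hab.ne]
  have hφ : Continuous (fun t : ℝ => t • (ω : EuclideanSpace ℝ (Fin d))) :=
    continuous_id.smul continuous_const
  have h2 : (fun t : ℝ => t • (ω : EuclideanSpace ℝ (Fin d))) '' closure (Ioo a b) ⊆
      closure ((fun t : ℝ => t • (ω : EuclideanSpace ℝ (Fin d))) '' (Ioo a b)) :=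
    image_closure_subset_closure_image hφ
  refine closure_mono ?_ (h2 ⟨x, h1, rfl⟩)
  rintro - ⟨r, hr, rfl⟩
  exact (smul_mem_annulus ha ω (ha.trans hr.1)).mpr hr


lemma polar_lintegral (hd : 1 ≤ d) (F : EuclideanSpace ℝ (Fin d) → ℝ≥0∞)
    (hF : AEMeasurable F volume) :
    ∫⁻ x, F x = ∫⁻ ω, (∫⁻ r in Set.Ioi (0:ℝ),
        ENNReal.ofReal (r ^ (d-1)) * F (r • (ω : EuclideanSpace ℝ (Fin d))))
      ∂(volume : Measure (EuclideanSpace ℝ (Fin d))).toSphere := by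
  haveI : Nontrivial Ed := by
    have : 0 < Module.finrank ℝ Ed := by
      rw [finrank_euclideanSpace_fin]; omega
    exact Module.nontrivial_of_finrank_pos this
  have hdim : Module.finrank ℝ Ed = d := finrank_euclideanSpace_fin
  set ν : Measure ({(0:Ed)}ᶜ : Set Ed) := volume.comap Subtype.val with hν
  have hmp := (volume : Measure Ed).measurePreserving_homeomorphUnitSphereProd
  rw [hdim] at hmp
  set h := homeomorphUnitSphereProd Ed with hh
  set pr : Measure (sphere (0:Ed) 1 × Ioi (0:ℝ)) :=
    (volume : Measure Ed).toSphere.prod (Measure.volumeIoiPow (d - 1)) with hpr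
  set ψ : sphere (0:Ed) 1 × Ioi (0:ℝ) → Ed := fun p => (p.2 : ℝ) • (p.1 : Ed) with hψ
  have hψc : Continuous ψ := by
    exact (continuous_subtype_val.comp continuous_snd).smul
      (continuous_subtype_val.comp continuous_fst)
  have hψh : ∀ x : ({(0:Ed)}ᶜ : Set Ed), ψ (h x) = (x : Ed) := by
    intro x
    simp only [hψ, hh, homeomorphUnitSphereProd_apply_fst_coe,
      homeomorphUnitSphereProd_apply_snd_coe]
    exact smul_inv_smul₀ (norm_ne_zero_iff.2 x.2) _
  have hmap : pr = ν.map h := hmp.map_eq.symm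
  have hmapψ : pr.map ψ = volume.restrict ({(0:Ed)}ᶜ) := by
    rw [hmap, Measure.map_map hψc.measurable h.continuous.measurable]
    have : ψ ∘ h = fun x : ({(0:Ed)}ᶜ : Set Ed) => (x : Ed) := funext hψh
    rw [this]
    exact map_comap_subtype_coe (measurableSet_singleton 0).compl _
  have hFψ : AEMeasurable (fun p => F (ψ p)) pr := by
    have h1 : AEMeasurable F (pr.map ψ) := by
      rw [hmapψ]; exact hF.restrict
    exact h1.comp_measurable hψc.measurable
  have h1 : ∫⁻ x, F x ∂(volume : Measure Ed) = ∫⁻ x : ({(0:Ed)}ᶜ : Set Ed), F x ∂ν := by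
    rw [hν, lintegral_subtype_comap (measurableSet_singleton 0).compl,
      MeasureTheory.restrict_compl_singleton]
  have h2 : ∫⁻ x : ({(0:Ed)}ᶜ : Set Ed), F x ∂ν = ∫⁻ p, F (ψ p) ∂pr := by
    rw [hmap, lintegral_map' (by rw [← hmap]; exact hFψ) h.continuous.measurable.aemeasurable]
    refine lintegral_congr fun x => ?_
    rw [hψh x]
  have h3 : ∫⁻ p, F (ψ p) ∂pr =
      ∫⁻ ω, (∫⁻ r, F ((r : ℝ) • (ω : Ed)) ∂(Measure.volumeIoiPow (d - 1)))
        ∂(volume : Measure Ed).toSphere :=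
    MeasureTheory.lintegral_prod _ hFψ
  rw [h1, h2, h3]
  refine lintegral_congr fun ω => ?_
  rw [Measure.volumeIoiPow,
    lintegral_withDensity_eq_lintegral_mul_non_measurable _
      (by exact (measurable_subtype_coe.pow_const _).ennreal_ofReal)
      (Filter.Eventually.of_forall fun r => ofReal_lt_top)]
  simp only [Pi.mul_apply]
  exact lintegral_subtype_comap measurableSet_Ioi
    (fun r : ℝ => ENNReal.ofReal (r ^ (d-1)) * F (r • (ω:Ed)))


lemma annulus_polar (hd : 1 ≤ d) {a b : ℝ} (ha : 0 < a) (f : EuclideanSpace ℝ (Fin d) → ℝ≥0∞)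
    (hf : AEMeasurable ((annulus d a b).indicator f) volume) :
    ∫⁻ x in annulus d a b, f x
      = ∫⁻ ω, (∫⁻ r in Ioo a b, ENNReal.ofReal (r ^ (d-1)) * f (r • (ω : EuclideanSpace ℝ (Fin d))))
        ∂(volume : Measure (EuclideanSpace ℝ (Fin d))).toSphere := by
  rw [← lintegral_indicator annulus_isOpen.measurableSet _, polar_lintegral hd _ hf]
  refine lintegral_congr fun ω => ?_
  have key : ∀ r ∈ Ioi (0:ℝ),
      ENNReal.ofReal (r^(d-1)) * (annulus d a b).indicator f (r • (ω:Ed))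
      = (Ioo a b).indicator (fun r => ENNReal.ofReal (r^(d-1)) * f (r • (ω:Ed))) r := by
    intro r hr
    by_cases h : r ∈ Ioo a b
    · rw [indicator_of_mem h, indicator_of_mem ((smul_mem_annulus ha ω hr).mpr h)]
    · rw [indicator_of_notMem h,
        indicator_of_notMem (fun hm => h ((smul_mem_annulus ha ω hr).mp hm)), mul_zero]
  rw [setLIntegral_congr_fun measurableSet_Ioi key,
    lintegral_indicator measurableSet_Ioo _,
    Measure.restrict_restrict measurableSet_Ioo]
  have h2 : Ioo a b ∩ Ioi (0:ℝ) = Ioo a b :=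
    inter_eq_self_of_subset_left (fun r hr => ha.trans hr.1)
  rw [h2]


lemma finite_restrict_Ioo (a b : ℝ) : IsFiniteMeasure (volume.restrict (Set.Ioo a b)) := by
  constructor
  rw [Measure.restrict_apply_univ]
  exact measure_Ioo_lt_top


lemma interval_holder {a b : ℝ} (hab : a < b) {f' : ℝ → ℝ}
    (hf' : MemLp f' 2 (volume.restrict (Set.Ioo a b))) :
    (∫ s in Set.Ioo a b, |f' s|) ^ 2 ≤ (b - a) * ∫ s in Set.Ioo a b, f' s ^ 2 := by
  haveI := finite_restrict_Ioo a b
  set μ' := volume.restrict (Set.Ioo a b) with hμ'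
  have h_int : Integrable f' μ' := hf'.integrable one_le_two
  have h_abs : Integrable (fun s => |f' s|) μ' := h_int.abs
  have h_sq : Integrable (fun s => f' s ^ 2) μ' := hf'.integrable_sq
  set N : ℝ≥0∞ := ∫⁻ s, ENNReal.ofReal (|f' s|) ∂μ' with hN
  set J : ℝ≥0∞ := ∫⁻ s, ENNReal.ofReal (f' s ^ 2) ∂μ' with hJ
  have hNeq : ENNReal.ofReal (∫ s, |f' s| ∂μ') = N :=
    ofReal_integral_eq_lintegral_ofReal h_abs (ae_of_all _ fun s => abs_nonneg _)
  have hJeq : ENNReal.ofReal (∫ s, f' s ^ 2 ∂μ') = J :=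
    ofReal_integral_eq_lintegral_ofReal h_sq (ae_of_all _ fun s => sq_nonneg _)
  have hpq : Real.HolderConjugate 2 2 := ⟨by norm_num, by norm_num, by norm_num⟩
  have hFm : AEMeasurable (fun s => ENNReal.ofReal (|f' s|)) μ' :=
    h_abs.aemeasurable.ennreal_ofReal
  have hH := ENNReal.lintegral_mul_le_Lp_mul_Lq μ' hpq hFm
    (aemeasurable_const (b := (1:ℝ≥0∞)))
  simp only [Pi.mul_apply, mul_one, ENNReal.one_rpow] at hH
  have hFrw : ∀ s : ℝ, (ENNReal.ofReal (|f' s|)) ^ (2:ℝ) = ENNReal.ofReal (f' s ^ 2) := by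
    intro s
    rw [ENNReal.ofReal_rpow_of_nonneg (abs_nonneg _) (by norm_num : (0:ℝ) ≤ 2)]
    congr 1
    rw [show ((2:ℝ)) = ((2:ℕ):ℝ) by norm_num, Real.rpow_natCast, sq_abs]
  simp only [hFrw] at hH
  have hμuniv : ∫⁻ _, (1:ℝ≥0∞) ∂μ' = ENNReal.ofReal (b - a) := by
    rw [lintegral_one, hμ', Measure.restrict_apply_univ, Real.volume_Ioo]
  rw [hμuniv] at hH
  -- hH : N ≤ J ^ (1/2) * (ofReal (b-a)) ^ (1/2)
  have hsq : N ^ (2:ℕ) ≤ J * ENNReal.ofReal (b - a) := by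
    calc N ^ (2:ℕ) ≤ (J ^ ((1:ℝ)/2) * ENNReal.ofReal (b - a) ^ ((1:ℝ)/2)) ^ (2:ℕ) :=
          pow_le_pow_left' hH 2
      _ = J * ENNReal.ofReal (b - a) := by
          rw [mul_pow, ← ENNReal.rpow_natCast (J ^ ((1:ℝ)/2)) 2,
            ← ENNReal.rpow_natCast (ENNReal.ofReal (b-a) ^ ((1:ℝ)/2)) 2,
            ← ENNReal.rpow_mul, ← ENNReal.rpow_mul]
          norm_num
  have hfin : ENNReal.ofReal ((∫ s, |f' s| ∂μ') ^ 2) ≤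
      ENNReal.ofReal ((∫ s, f' s ^ 2 ∂μ') * (b - a)) := by
    rw [ENNReal.ofReal_pow (integral_nonneg fun s => abs_nonneg _), hNeq,
      ENNReal.ofReal_mul (integral_nonneg fun s => sq_nonneg _), hJeq]
    exact hsq
  have := (ENNReal.ofReal_le_ofReal_iff
    (mul_nonneg (integral_nonneg fun s => sq_nonneg _) (by linarith))).mp hfin
  nlinarith [integral_nonneg (μ := μ') (f := fun s => f' s ^ 2) (fun s => sq_nonneg (f' s))]


lemma interval_base {a b : ℝ} (hab : a < b) (f f' : ℝ → ℝ)
    (h : AdmissibleOnInterval a b f f') :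
    (∫ t in Set.Ioo a b, f t ^ 2) ≤ (b - a) ^ 2 * ∫ t in Set.Ioo a b, f' t ^ 2 := by
  haveI := finite_restrict_Ioo a b
  obtain ⟨hL2, hFTC, ha0, hb0⟩ := h
  have h_int : Integrable f' (volume.restrict (Set.Ioo a b)) := hL2.integrable one_le_two
  have h_int_Icc : IntegrableOn f' (Set.Icc a b) volume :=
    (integrableOn_Icc_iff_integrableOn_Ioo).mpr h_int
  set M : ℝ := ∫ s in Set.Ioo a b, |f' s| with hM
  have hM0 : 0 ≤ M := integral_nonneg fun s => abs_nonneg _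
  have hbound : ∀ x ∈ Set.Icc a b, |f x| ≤ M := by
    intro x hx
    rw [hFTC x hx]
    calc |∫ s in a..x, f' s| ≤ ∫ s in a..x, |f' s| :=
          intervalIntegral.abs_integral_le_integral_abs hx.1
      _ = ∫ s in Set.Ioo a x, |f' s| := by
          rw [intervalIntegral.integral_of_le hx.1, integral_Ioc_eq_integral_Ioo]
      _ ≤ M := by
          refine setIntegral_mono_set h_int.abs
            (ae_of_all _ fun s => abs_nonneg _) ?_
          exact HasSubset.Subset.eventuallyLE (Set.Ioo_subset_Ioo le_rfl hx.2)
  have hcont : ContinuousOn f (Set.Icc a b) := by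
    have hc : ContinuousOn (fun x => ∫ t in Set.Ioc a x, f' t) (Set.Icc a b) :=
      intervalIntegral.continuousOn_primitive h_int_Icc
    refine hc.congr fun x hx => ?_
    rw [hFTC x hx, intervalIntegral.integral_of_le hx.1]
  have hfi : IntegrableOn (fun t => f t ^ 2) (Set.Ioo a b) volume :=
    ((hcont.pow 2).integrableOn_Icc).mono_set Set.Ioo_subset_Icc_self
  have hstep : (∫ t in Set.Ioo a b, f t ^ 2) ≤ (b - a) * M ^ 2 := by
    calc (∫ t in Set.Ioo a b, f t ^ 2) ≤ ∫ _ in Set.Ioo a b, M ^ 2 := by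
          refine setIntegral_mono_on hfi
            (integrableOn_const measure_Ioo_lt_top.ne) measurableSet_Ioo
            (fun x hx => ?_)
          have hb := hbound x (Set.mem_Icc_of_Ioo hx)
          nlinarith [sq_abs (f x), abs_nonneg (f x)]
      _ = (b - a) * M ^ 2 := by
          rw [setIntegral_const, Real.volume_real_Ioo_of_le hab.le, smul_eq_mul]
  have hhold := interval_holder hab hL2
  nlinarith [integral_nonneg (μ := volume.restrict (Set.Ioo a b)) (f := fun s => f' s ^ 2)
    (fun s => sq_nonneg (f' s))]


lemma interval_pos {a b : ℝ} (hab : a < b) {c : ℝ} (hc : 0 ≤ c)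
    (h : ∀ f f' : ℝ → ℝ, AdmissibleOnInterval a b f f' →
      (∫ t in Set.Ioo a b, f t ^ 2) ≤ c ^ 2 * ∫ t in Set.Ioo a b, f' t ^ 2) :
    0 < c := by
  haveI := finite_restrict_Ioo a b
  set f₀ : ℝ → ℝ := fun x => (x - a) * (b - x) with hf₀
  set g₀ : ℝ → ℝ := fun x => b - x - (x - a) with hg₀
  have hg₀c : Continuous g₀ := by fun_prop
  have hderiv : ∀ x : ℝ, HasDerivAt f₀ (g₀ x) x := by
    intro x
    have h1 : HasDerivAt (fun y : ℝ => (y - a) * (b - y)) (1 * (b - x) + (x - a) * (-1)) x := by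
      exact (((hasDerivAt_id x).sub_const a)).mul
        (((hasDerivAt_const x b).sub (hasDerivAt_id x)).congr_deriv (by norm_num))
    convert h1 using 1
    simp [hg₀]; ring
  have hadm : AdmissibleOnInterval a b f₀ g₀ := by
    refine ⟨?_, ?_, by simp [hf₀], by simp [hf₀]⟩
    · refine MemLp.of_bound (hg₀c.aestronglyMeasurable.restrict) (b - a) ?_
      filter_upwards [ae_restrict_mem measurableSet_Ioo] with x hx
      rw [Real.norm_eq_abs, abs_le]
      constructor <;> [skip; skip] <;> simp only [hg₀] <;>
        [linarith [hx.1, hx.2]; linarith [hx.1, hx.2]]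
    · intro x hx
      have := intervalIntegral.integral_eq_sub_of_hasDerivAt
        (f := f₀) (f' := g₀) (fun s _ => hderiv s)
        (hg₀c.intervalIntegrable a x)
      rw [this]
      simp [hf₀]
  have hineq := h f₀ g₀ hadm
  have hpos : 0 < ∫ t in Set.Ioo a b, f₀ t ^ 2 := by
    have hfi : IntegrableOn (fun t => f₀ t ^ 2) (Set.Ioo a b) volume := by
      have : Continuous fun t => f₀ t ^ 2 := by fun_prop
      exact (this.continuousOn.integrableOn_Icc).mono_set Set.Ioo_subset_Icc_self
    rw [setIntegral_pos_iff_support_of_nonneg_ae (ae_of_all _ fun t => sq_nonneg _) hfi]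
    refine lt_of_lt_of_le ?_ (measure_mono (?_ : Set.Ioo a b ⊆ _))
    · rw [Real.volume_Ioo]; exact ENNReal.ofReal_pos.mpr (by linarith)
    · intro x hx
      refine ⟨?_, hx⟩
      simp only [Function.mem_support]
      exact pow_ne_zero 2 (ne_of_gt (mul_pos (by linarith [hx.1]) (by linarith [hx.2])))
  rcases hc.eq_or_lt with h0 | h0
  · exfalso
    rw [← h0] at hineq
    simp only [ne_eq, OfNat.ofNat_ne_zero, not_false_eq_true, zero_pow, zero_mul] at hineq
    linarith
  · exact h0


lemma key_slice {a b : ℝ} (ha : 0 < a) (hab : a < b)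
    {u : EuclideanSpace ℝ (Fin d) → ℝ} (hu : AdmissibleOnAnnulus d a b u)
    {c : ℝ} (hc0 : 0 < c)
    (hc : ∀ f f' : ℝ → ℝ, AdmissibleOnInterval a b f f' →
      (∫ t in Set.Ioo a b, f t ^ 2) ≤ c ^ 2 * ∫ t in Set.Ioo a b, f' t ^ 2)
    (ω : sphere (0 : EuclideanSpace ℝ (Fin d)) 1) :
    ∫⁻ r in Set.Ioo a b, ENNReal.ofReal (u (r • (ω : EuclideanSpace ℝ (Fin d))) ^ 2)
      ≤ ENNReal.ofReal (c ^ 2) * ∫⁻ r in Set.Ioo a b,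
          ENNReal.ofReal
            ((fderiv ℝ u (r • (ω : EuclideanSpace ℝ (Fin d)))
              (ω : EuclideanSpace ℝ (Fin d))) ^ 2) := by
  haveI := finite_restrict_Ioo a b
  set g : ℝ → ℝ := fun r => fderiv ℝ u (r • (ω:Ed)) (ω:Ed) with hg
  have hgm : Measurable g := by
    have h1 : Measurable fun x : Ed => fderiv ℝ u x (ω:Ed) :=
      measurable_fderiv_apply_const ℝ u (ω:Ed)
    exact h1.comp (continuous_id.smul continuous_const).measurable
  set J : ℝ≥0∞ := ∫⁻ r in Set.Ioo a b, ENNReal.ofReal (g r ^ 2) with hJdef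
  by_cases hJ : J = ⊤
  · rw [hJ, ENNReal.mul_top (ENNReal.ofReal_pos.mpr (by positivity)).ne']
    exact le_top
  -- the set of admissibility data
  set f : ℝ → ℝ := fun x => u (x • (ω:Ed)) with hf
  have hg2int : Integrable (fun r => g r ^ 2) (volume.restrict (Set.Ioo a b)) := by
    refine ⟨(hgm.pow_const 2).aestronglyMeasurable, ?_⟩
    show (∫⁻ r, ‖g r ^ 2‖ₑ ∂(volume.restrict (Set.Ioo a b))) < ⊤
    have : (∫⁻ r, ‖g r ^ 2‖ₑ ∂(volume.restrict (Set.Ioo a b))) = J :=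
      lintegral_congr fun r => by
        rw [Real.enorm_eq_ofReal_abs, abs_of_nonneg (sq_nonneg _)]
    rw [this]
    exact lt_top_iff_ne_top.mpr hJ
  have hgL2 : MemLp g 2 (volume.restrict (Set.Ioo a b)) :=
    (memLp_two_iff_integrable_sq (hgm.aestronglyMeasurable.restrict)).mpr hg2int
  have hg_int : IntegrableOn g (Set.Ioo a b) volume := hgL2.integrable one_le_two
  have hcont : ContinuousOn f (Set.Icc a b) := by
    refine (hu.1.comp (continuous_id.smul continuous_const).continuousOn ?_)
    exact fun x hx => smul_mem_closure ha hab ω hx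
  have hfa : f a = 0 := by
    have hfr : (a : ℝ) • (ω:Ed) ∈ frontier (annulus d a b) := by
      rw [annulus_isOpen.frontier_eq]
      refine ⟨smul_mem_closure ha hab ω (left_mem_Icc.mpr hab.le), fun hmem => ?_⟩
      exact absurd (((smul_mem_annulus ha ω ha).mp hmem).1) (lt_irrefl a)
    simpa using hu.2.1 hfr
  have hfb : f b = 0 := by
    have hfr : (b : ℝ) • (ω:Ed) ∈ frontier (annulus d a b) := by
      rw [annulus_isOpen.frontier_eq]
      refine ⟨smul_mem_closure ha hab ω (right_mem_Icc.mpr hab.le), fun hmem => ?_⟩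
      exact absurd (((smul_mem_annulus ha ω (ha.trans hab)).mp hmem).2) (lt_irrefl b)
    simpa using hu.2.1 hfr
  have hderiv : ∀ y ∈ Set.Ioo a b, HasDerivAt f (g y) y := by
    intro y hy
    have hyann : y • (ω:Ed) ∈ annulus d a b :=
      (smul_mem_annulus ha ω (ha.trans hy.1)).mpr hy
    have hdiff : DifferentiableAt ℝ u (y • (ω:Ed)) :=
      (hu.2.2.1 _ hyann).differentiableAt (annulus_isOpen.mem_nhds hyann)
    have hsm : HasDerivAt (fun x : ℝ => x • (ω:Ed)) (ω:Ed) y := by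
      simpa using (hasDerivAt_id y).smul_const (ω:Ed)
    exact hdiff.hasFDerivAt.comp_hasDerivAt y hsm
  have hFTC : ∀ x ∈ Set.Icc a b, f x = ∫ s in a..x, g s := by
    intro x hx
    have hint : IntervalIntegrable g volume a x := by
      rw [intervalIntegrable_iff_integrableOn_Ioc_of_le hx.1,
        integrableOn_Ioc_iff_integrableOn_Ioo]
      exact hg_int.mono_set (Set.Ioo_subset_Ioo le_rfl hx.2)
    have := intervalIntegral.integral_eq_sub_of_hasDeriv_right_of_le hx.1
      (hcont.mono (Set.Icc_subset_Icc le_rfl hx.2))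
      (fun y hy => (hderiv y (Set.Ioo_subset_Ioo le_rfl hx.2 hy)).hasDerivWithinAt)
      hint
    rw [this, hfa, sub_zero]
  have hadm : AdmissibleOnInterval a b f g := ⟨hgL2, hFTC, hfa, hfb⟩
  have hineq := hc f g hadm
  -- convert to lintegrals
  have hfm : AEStronglyMeasurable (fun t => f t ^ 2) (volume.restrict (Set.Ioo a b)) :=
    ((hcont.mono Set.Ioo_subset_Icc_self).pow 2).aestronglyMeasurable measurableSet_Ioo
  have hLrw : (∫ t in Set.Ioo a b, f t ^ 2) =
      (∫⁻ t in Set.Ioo a b, ENNReal.ofReal (f t ^ 2)).toReal := by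
    rw [integral_eq_lintegral_of_nonneg_ae (ae_of_all _ fun t => sq_nonneg _) hfm]
  have hRrw : (∫ t in Set.Ioo a b, g t ^ 2) = J.toReal := by
    rw [integral_eq_lintegral_of_nonneg_ae (ae_of_all _ fun t => sq_nonneg _)
      (hgm.pow_const 2).aestronglyMeasurable.restrict]
  set L : ℝ≥0∞ := ∫⁻ t in Set.Ioo a b, ENNReal.ofReal (f t ^ 2) with hLdef
  have hLfin : L ≠ ⊤ := by
    obtain ⟨M, hM⟩ := (isCompact_Icc (a := a) (b := b)).exists_bound_of_continuousOn hcont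
    have hle : L ≤ ENNReal.ofReal (M ^ 2) * volume (Set.Ioo a b) := by
      rw [← setLIntegral_const]
      refine lintegral_mono_ae ?_
      filter_upwards [ae_restrict_mem measurableSet_Ioo] with t ht
      refine ENNReal.ofReal_le_ofReal ?_
      have := hM t (Set.mem_Icc_of_Ioo ht)
      rw [Real.norm_eq_abs] at this
      nlinarith [sq_abs (f t), abs_nonneg (f t)]
    refine (lt_of_le_of_lt hle ?_).ne
    exact ENNReal.mul_lt_top ofReal_lt_top measure_Ioo_lt_top
  have htoReal : L.toReal ≤ c ^ 2 * J.toReal := by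
    rw [hLrw, hRrw] at hineq; exact hineq
  calc L = ENNReal.ofReal L.toReal := (ENNReal.ofReal_toReal hLfin).symm
    _ ≤ ENNReal.ofReal (c ^ 2 * J.toReal) := ENNReal.ofReal_le_ofReal htoReal
    _ = ENNReal.ofReal (c ^ 2) * ENNReal.ofReal J.toReal :=
        ENNReal.ofReal_mul (by positivity)
    _ = ENNReal.ofReal (c ^ 2) * J := by rw [ENNReal.ofReal_toReal hJ]


lemma annulus_bound (hd : 2 ≤ d) {a b : ℝ} (ha : 0 < a) (hab : a < b)
    {c : ℝ} (hc0 : 0 < c)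
    (hc : ∀ f f' : ℝ → ℝ, AdmissibleOnInterval a b f f' →
      (∫ t in Set.Ioo a b, f t ^ 2) ≤ c ^ 2 * ∫ t in Set.Ioo a b, f' t ^ 2)
    (u : EuclideanSpace ℝ (Fin d) → ℝ) (hu : AdmissibleOnAnnulus d a b u) :
    (∫ x in annulus d a b, u x ^ 2) ≤
      ((b/a) ^ (((d:ℝ)-1)/2) * c) ^ 2 * ∫ x in annulus d a b, ‖fderiv ℝ u x‖ ^ 2 := by
  have hd1 : 1 ≤ d := le_trans (by norm_num) hd
  set n : ℕ := d - 1 with hn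
  set Kr : ℝ := (b/a) ^ n * c ^ 2 with hKr
  have hb : 0 < b := ha.trans hab
  have hKr0 : 0 ≤ Kr := mul_nonneg (pow_nonneg (div_nonneg hb.le ha.le) n) (sq_nonneg c)
  set f1 : Ed → ℝ≥0∞ := fun x => ENNReal.ofReal (u x ^ 2) with hf1
  set f2 : Ed → ℝ≥0∞ := fun x => ENNReal.ofReal (‖fderiv ℝ u x‖ ^ 2) with hf2
  have hum : AEMeasurable u (volume.restrict (annulus d a b)) :=
    hu.2.2.2.1.aestronglyMeasurable.aemeasurable
  have hind1 : AEMeasurable ((annulus d a b).indicator f1) volume := by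
    rw [aemeasurable_indicator_iff annulus_isOpen.measurableSet]
    exact (hum.pow_const 2).ennreal_ofReal
  have hf2m : Measurable f2 :=
    (((measurable_fderiv ℝ u).norm).pow_const 2).ennreal_ofReal
  have hind2 : AEMeasurable ((annulus d a b).indicator f2) volume :=
    (hf2m.indicator annulus_isOpen.measurableSet).aemeasurable
  set I1 : ℝ≥0∞ := ∫⁻ x in annulus d a b, f1 x with hI1
  set I2 : ℝ≥0∞ := ∫⁻ x in annulus d a b, f2 x with hI2
  -- the lintegral bound
  have hmain : I1 ≤ ENNReal.ofReal Kr * I2 := by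
    rw [hI1, hI2, annulus_polar hd1 ha f1 hind1, annulus_polar hd1 ha f2 hind2]
    rw [← lintegral_const_mul' _ _ ofReal_ne_top]
    refine lintegral_mono fun ω => ?_
    -- fixed ω
    set g : ℝ → ℝ := fun r => fderiv ℝ u (r • (ω:Ed)) (ω:Ed) with hg
    have hA0 : (ENNReal.ofReal (a ^ n)) ≠ 0 :=
      (ENNReal.ofReal_pos.mpr (by positivity)).ne'
    have step1 : ∫⁻ r in Ioo a b, ENNReal.ofReal (r ^ n) * f1 (r • (ω:Ed))
        ≤ ENNReal.ofReal (b ^ n) *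
          ∫⁻ r in Ioo a b, ENNReal.ofReal (u (r • (ω:Ed)) ^ 2) := by
      rw [← lintegral_const_mul' _ _ ofReal_ne_top]
      refine lintegral_mono_ae ?_
      filter_upwards [ae_restrict_mem measurableSet_Ioo] with r hr
      exact mul_le_mul' (ENNReal.ofReal_le_ofReal
        (pow_le_pow_left₀ (ha.trans hr.1).le hr.2.le n)) le_rfl
    have step2 := key_slice ha hab hu hc0 hc ω
    have step3 : ∫⁻ r in Ioo a b, ENNReal.ofReal (g r ^ 2)
        ≤ (ENNReal.ofReal (a ^ n))⁻¹ *
          ∫⁻ r in Ioo a b, ENNReal.ofReal (r ^ n) * f2 (r • (ω:Ed)) := by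
      rw [← lintegral_const_mul' _ _ (ENNReal.inv_ne_top.mpr hA0)]
      refine lintegral_mono_ae ?_
      filter_upwards [ae_restrict_mem measurableSet_Ioo] with r hr
      have hXY : ENNReal.ofReal (g r ^ 2) ≤ f2 (r • (ω:Ed)) := by
        refine ENNReal.ofReal_le_ofReal ?_
        have h1 : |g r| ≤ ‖fderiv ℝ u (r • (ω:Ed))‖ := by
          have := (fderiv ℝ u (r • (ω:Ed))).le_opNorm (ω:Ed)
          rwa [mem_sphere_zero_iff_norm.mp ω.2, mul_one] at this
        nlinarith [sq_abs (g r), abs_nonneg (g r), norm_nonneg (fderiv ℝ u (r • (ω:Ed)))]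
      have h2 : ENNReal.ofReal (a ^ n) * ENNReal.ofReal (g r ^ 2)
          ≤ ENNReal.ofReal (r ^ n) * f2 (r • (ω:Ed)) :=
        mul_le_mul' (ENNReal.ofReal_le_ofReal (pow_le_pow_left₀ ha.le hr.1.le n)) hXY
      calc ENNReal.ofReal (g r ^ 2)
          = (ENNReal.ofReal (a ^ n))⁻¹ *
            (ENNReal.ofReal (a ^ n) * ENNReal.ofReal (g r ^ 2)) := by
            rw [← mul_assoc, ENNReal.inv_mul_cancel hA0 ofReal_ne_top, one_mul]
        _ ≤ _ := mul_le_mul_right h2 _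
    calc ∫⁻ r in Ioo a b, ENNReal.ofReal (r ^ n) * f1 (r • (ω:Ed))
        ≤ ENNReal.ofReal (b ^ n) *
          (ENNReal.ofReal (c ^ 2) * ((ENNReal.ofReal (a ^ n))⁻¹ *
            ∫⁻ r in Ioo a b, ENNReal.ofReal (r ^ n) * f2 (r • (ω:Ed)))) := by
          refine step1.trans (mul_le_mul_right (step2.trans (mul_le_mul_right step3 _)) _)
      _ = ENNReal.ofReal Kr * ∫⁻ r in Ioo a b, ENNReal.ofReal (r ^ n) * f2 (r • (ω:Ed)) := by
          rw [← mul_assoc, ← mul_assoc]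
          congr 1
          rw [← ENNReal.ofReal_inv_of_pos (pow_pos ha n),
            ← ENNReal.ofReal_mul (pow_nonneg hb.le n),
            ← ENNReal.ofReal_mul (mul_nonneg (pow_nonneg hb.le n) (sq_nonneg c))]
          congr 1
          rw [hKr, div_pow]
          ring
  -- conversions to Bochner integrals
  have hI2fin : I2 ≠ ⊤ := by
    have hsq := hu.2.2.2.2.integrable_sq
    have h2 := hsq.2
    rw [HasFiniteIntegral] at h2
    have : (∫⁻ x in annulus d a b, ‖‖fderiv ℝ u x‖ ^ 2‖ₑ) = I2 :=
      lintegral_congr fun x => by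
        rw [Real.enorm_eq_ofReal_abs, abs_of_nonneg (sq_nonneg _)]
    rw [this] at h2
    exact h2.ne
  have hLrw : (∫ x in annulus d a b, u x ^ 2) = I1.toReal := by
    rw [integral_eq_lintegral_of_nonneg_ae (ae_of_all _ fun x => sq_nonneg _)
      (hum.pow_const 2).aestronglyMeasurable]
  have hRrw : (∫ x in annulus d a b, ‖fderiv ℝ u x‖ ^ 2) = I2.toReal := by
    rw [integral_eq_lintegral_of_nonneg_ae (ae_of_all _ fun x => sq_nonneg _)
      ((measurable_fderiv ℝ u).norm.pow_const 2).aestronglyMeasurable.restrict]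
  have hfinal : I1.toReal ≤ Kr * I2.toReal := by
    have h1 : I1.toReal ≤ (ENNReal.ofReal Kr * I2).toReal :=
      ENNReal.toReal_mono (ENNReal.mul_ne_top ofReal_ne_top hI2fin) hmain
    rwa [ENNReal.toReal_mul, ENNReal.toReal_ofReal hKr0] at h1
  have hK2 : ((b/a) ^ (((d:ℝ)-1)/2) * c) ^ 2 = Kr := by
    rw [mul_pow, hKr]
    congr 1
    have hba : (0:ℝ) < b / a := div_pos hb ha
    rw [← Real.rpow_natCast ((b/a) ^ (((d:ℝ)-1)/2)) 2, ← Real.rpow_mul hba.le]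
    have h2 : ((d:ℝ)-1)/2 * ((2:ℕ):ℝ) = ((n:ℕ):ℝ) := by
      rw [hn, Nat.cast_sub hd1]
      push_cast
      ring
    rw [h2, Real.rpow_natCast]
  rw [hLrw, hRrw, hK2]
  exact hfinal

end AuxiliaryLemmas

/-- Comparison of the Poincaré constants of the annulus and the interval:
`C(a,b) ≤ (b/a)^{(d-1)/2} · c(a,b)`. -/
theorem annulusPoincareConst_le (d : ℕ) (hd : 2 ≤ d) (a b : ℝ)
    (ha : 0 < a) (hab : a < b) :
    annulusPoincareConst d a b ≤
      (b / a) ^ (((d:ℝ) - 1) / 2) * intervalPoincareConst a b := by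
  have hb : 0 < b := ha.trans hab
  set β : ℝ := (b / a) ^ (((d:ℝ) - 1) / 2) with hβ
  have hβ0 : 0 < β := Real.rpow_pos_of_pos (div_pos hb ha) _
  set T := {c : ℝ | 0 ≤ c ∧ ∀ f f' : ℝ → ℝ, AdmissibleOnInterval a b f f' →
    (∫ t in Set.Ioo a b, f t ^ 2) ≤ c ^ 2 * ∫ t in Set.Ioo a b, f' t ^ 2} with hTdef
  set S := {C : ℝ | 0 ≤ C ∧ ∀ u : EuclideanSpace ℝ (Fin d) → ℝ,
    AdmissibleOnAnnulus d a b u →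
      (∫ x in annulus d a b, u x ^ 2) ≤
        C ^ 2 * ∫ x in annulus d a b, ‖fderiv ℝ u x‖ ^ 2} with hSdef
  have hT : (b - a) ∈ T := ⟨by linarith, fun f f' h => by
    have := interval_base hab f f' h
    simpa using this⟩
  have hS : ∀ c ∈ T, β * c ∈ S := by
    intro c hc
    have hc0 : 0 < c := interval_pos hab hc.1 hc.2
    exact ⟨mul_nonneg hβ0.le hc0.le,
      fun u hu => annulus_bound hd ha hab hc0 hc.2 u hu⟩
  have hbdd : BddBelow S := ⟨0, fun x hx => hx.1⟩
  have h1 : ∀ c ∈ T, sInf S ≤ β * c := fun c hc => csInf_le hbdd (hS c hc)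
  have h2 : sInf S / β ≤ sInf T := by
    refine le_csInf ⟨_, hT⟩ fun c hc => ?_
    rw [div_le_iff₀ hβ0]
    exact (h1 c hc).trans_eq (mul_comm β c)
  have h3 : sInf S ≤ β * sInf T := by
    have := (div_le_iff₀ hβ0).mp h2
    linarith [this]
  exact h3
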